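/- The family of functions f_{a,b} : ℝ_{≥0}² → ℝ, f_{a,b}(x, y) = min(a·x, b·y), indexed by pairs of positive integers (a, b) with gcd(a, b) = 1, is linearly independent over ℚ: any finite ℚ-linear combination of distinct such functions that is identically zero on ℝ_{≥0}² has all coefficients zero. -/

import Mathlib

lemma stmt6_inj (a b a' b' : ℕ) (ha : 0 < a) (ha' : 0 < a')
    (h : Nat.gcd a b = 1) (h' : Nat.gcd a' b' = 1)
    (heq : (b : ℝ) / a = (b' : ℝ) / a') : a = a' ∧ b = b' := by
  have ha0 : (a : ℝ) ≠ 0 := Nat.cast_ne_zero.mpr ha.ne'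
  have ha0' : (a' : ℝ) ≠ 0 := Nat.cast_ne_zero.mpr ha'.ne'
  have hR : (b : ℝ) * a' = b' * a := by field_simp at heq; linarith
  have hN : b * a' = b' * a := by exact_mod_cast hR
  have hc : Nat.Coprime a b := h
  have hc' : Nat.Coprime a' b' := h'
  have h1 : a ∣ a' := by
    have : a ∣ a' * b := ⟨b', by rw [mul_comm a' b, hN, mul_comm]⟩
    exact (Nat.Coprime.dvd_of_dvd_mul_right hc this)
  have h2 : a' ∣ a := by
    have : a' ∣ a * b' := ⟨b, by rw [mul_comm a b', ← hN, mul_comm]⟩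
    exact (Nat.Coprime.dvd_of_dvd_mul_right hc' this)
  have haa : a = a' := Nat.dvd_antisymm h1 h2
  refine ⟨haa, ?_⟩
  have : b * a = b' * a := by rw [← hN, haa]
  exact Nat.eq_of_mul_eq_mul_right ha this

theorem stmt6 :
    LinearIndependent ℚ
      (fun q : {q : ℕ × ℕ // 0 < q.1 ∧ 0 < q.2 ∧ Nat.gcd q.1 q.2 = 1} =>
        (fun p : {x : ℝ // 0 ≤ x} × {x : ℝ // 0 ≤ x} =>
            min ((q.1.1 : ℝ) * (p.1 : ℝ)) ((q.1.2 : ℝ) * (p.2 : ℝ)) :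
          {x : ℝ // 0 ≤ x} × {x : ℝ // 0 ≤ x} → ℝ)) := by
  set ι := {q : ℕ × ℕ // 0 < q.1 ∧ 0 < q.2 ∧ Nat.gcd q.1 q.2 = 1}
  rw [linearIndependent_iff']
  intro s c hsum q0 hq0
  -- evaluation of the vanishing linear combination along the line y = 1
  have hE : ∀ x : ℝ, 0 ≤ x →
      ∑ q ∈ s, (c q : ℝ) * min ((q.1.1 : ℝ) * x) ((q.1.2 : ℝ) * 1) = 0 := by
    intro x hx
    have := congrFun hsum (⟨x, hx⟩, ⟨(1 : ℝ), zero_le_one⟩)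
    simpa [Finset.sum_apply, Rat.smul_def] using this
  obtain ⟨ha0, hb0, hcop0⟩ := q0.2
  have ha0R : (0 : ℝ) < (q0.1.1 : ℝ) := by exact_mod_cast ha0
  have hb0R : (0 : ℝ) < (q0.1.2 : ℝ) := by exact_mod_cast hb0
  set r : ℝ := (q0.1.2 : ℝ) / (q0.1.1 : ℝ) with hr
  have hrpos : 0 < r := div_pos hb0R ha0R
  -- the breakpoint function
  set d : ι → ℝ := fun q => |(q.1.2 : ℝ) / (q.1.1 : ℝ) - r| with hd
  have hdpos : ∀ q ∈ s.erase q0, 0 < d q := by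
    intro q hq
    have hne : q ≠ q0 := Finset.ne_of_mem_erase hq
    obtain ⟨ha, hb, hcop⟩ := q.2
    have : (q.1.2 : ℝ) / (q.1.1 : ℝ) ≠ r := by
      intro hEq
      obtain ⟨h1, h2⟩ := stmt6_inj q.1.1 q.1.2 q0.1.1 q0.1.2 ha ha0 hcop hcop0 hEq
      exact hne (Subtype.ext (Prod.ext h1 h2))
    simpa [hd] using abs_pos.mpr (sub_ne_zero.mpr this)
  set F : Finset ℝ := insert r ((s.erase q0).image d) with hF
  have hFne : F.Nonempty := ⟨r, Finset.mem_insert_self _ _⟩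
  set ε : ℝ := F.min' hFne / 2 with hε
  have hminpos : 0 < F.min' hFne := by
    rw [Finset.lt_min'_iff]
    intro y hy
    rcases Finset.mem_insert.mp hy with h | h
    · exact h ▸ hrpos
    · obtain ⟨q, hq, rfl⟩ := Finset.mem_image.mp h
      exact hdpos q hq
  have hεpos : 0 < ε := by positivity
  have hεr : ε < r := by
    have : F.min' hFne ≤ r := Finset.min'_le _ _ (Finset.mem_insert_self _ _)
    rw [hε]; linarith
  have hεd : ∀ q ∈ s.erase q0, ε < d q := by
    intro q hq
    have h1 : F.min' hFne ≤ d q :=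
      Finset.min'_le _ _ (Finset.mem_insert_of_mem (Finset.mem_image_of_mem d hq))
    rw [hε]; linarith
  -- the three evaluation points
  have hx1 : (0:ℝ) ≤ r - ε := by linarith
  have hx2 : (0:ℝ) ≤ r := le_of_lt hrpos
  have hx3 : (0:ℝ) ≤ r + ε := by linarith
  have h1 := hE (r - ε) hx1
  have h2 := hE r hx2
  have h3 := hE (r + ε) hx3
  have key : ∑ q ∈ s, (c q : ℝ) *
      (min ((q.1.1 : ℝ) * (r - ε)) ((q.1.2 : ℝ) * 1)
        + min ((q.1.1 : ℝ) * (r + ε)) ((q.1.2 : ℝ) * 1)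
        - 2 * min ((q.1.1 : ℝ) * r) ((q.1.2 : ℝ) * 1)) = 0 := by
    have expand : ∑ q ∈ s, (c q : ℝ) *
        (min ((q.1.1 : ℝ) * (r - ε)) ((q.1.2 : ℝ) * 1)
          + min ((q.1.1 : ℝ) * (r + ε)) ((q.1.2 : ℝ) * 1)
          - 2 * min ((q.1.1 : ℝ) * r) ((q.1.2 : ℝ) * 1))
        = (∑ q ∈ s, (c q : ℝ) * min ((q.1.1 : ℝ) * (r - ε)) ((q.1.2 : ℝ) * 1))
          + (∑ q ∈ s, (c q : ℝ) * min ((q.1.1 : ℝ) * (r + ε)) ((q.1.2 : ℝ) * 1))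
          - 2 * (∑ q ∈ s, (c q : ℝ) * min ((q.1.1 : ℝ) * r) ((q.1.2 : ℝ) * 1)) := by
      rw [Finset.mul_sum, ← Finset.sum_add_distrib, ← Finset.sum_sub_distrib]
      exact Finset.sum_congr rfl fun q _ => by ring
    rw [expand, h1, h2, h3]; ring
  -- all terms with q ≠ q0 vanish
  have hsingle : ∑ q ∈ s, (c q : ℝ) *
      (min ((q.1.1 : ℝ) * (r - ε)) ((q.1.2 : ℝ) * 1)
        + min ((q.1.1 : ℝ) * (r + ε)) ((q.1.2 : ℝ) * 1)
        - 2 * min ((q.1.1 : ℝ) * r) ((q.1.2 : ℝ) * 1))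
      = (c q0 : ℝ) * (-( (q0.1.1 : ℝ) * ε)) := by
    rw [Finset.sum_eq_single_of_mem q0 hq0]
    · -- value of the q0 term
      have e1 : min ((q0.1.1 : ℝ) * (r - ε)) ((q0.1.2 : ℝ) * 1)
          = (q0.1.1 : ℝ) * (r - ε) := by
        apply min_eq_left
        rw [mul_one]
        have : r - ε ≤ r := by linarith
        calc (q0.1.1 : ℝ) * (r - ε) ≤ (q0.1.1 : ℝ) * r :=
              mul_le_mul_of_nonneg_left this (le_of_lt ha0R)
          _ = (q0.1.2 : ℝ) := by rw [hr]; field_simp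
      have e2 : min ((q0.1.1 : ℝ) * r) ((q0.1.2 : ℝ) * 1) = (q0.1.1 : ℝ) * r := by
        apply min_eq_left
        rw [mul_one, hr]
        field_simp
        exact le_rfl
      have e3 : min ((q0.1.1 : ℝ) * (r + ε)) ((q0.1.2 : ℝ) * 1) = (q0.1.2 : ℝ) * 1 := by
        apply min_eq_right
        rw [mul_one]
        have : r ≤ r + ε := by linarith
        calc (q0.1.2 : ℝ) = (q0.1.1 : ℝ) * r := by rw [hr]; field_simp
          _ ≤ (q0.1.1 : ℝ) * (r + ε) := mul_le_mul_of_nonneg_left this (le_of_lt ha0R)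
      rw [e1, e2, e3]
      have hb0r : (q0.1.2 : ℝ) = (q0.1.1 : ℝ) * r := by rw [hr]; field_simp
      rw [mul_one, hb0r]
      ring
    · intro q hq hne
      have hqe : q ∈ s.erase q0 := Finset.mem_erase.mpr ⟨hne, hq⟩
      obtain ⟨ha, hb, hcop⟩ := q.2
      have haR : (0 : ℝ) < (q.1.1 : ℝ) := by exact_mod_cast ha
      set rq : ℝ := (q.1.2 : ℝ) / (q.1.1 : ℝ) with hrq
      have hbr : (q.1.2 : ℝ) = (q.1.1 : ℝ) * rq := by rw [hrq]; field_simp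
      have hdist : ε < |rq - r| := hεd q hqe
      rcases lt_or_ge rq r with hlt | hge
      · -- rq < r - ε : all three mins are the constant b
        have hlt' : rq < r - ε := by
          have h' : ε < r - rq := by
            have h'' := hdist
            rw [abs_sub_comm, abs_of_pos (by linarith : (0:ℝ) < r - rq)] at h''
            exact h''
          linarith
        have emin : ∀ x : ℝ, r - ε ≤ x →
            min ((q.1.1 : ℝ) * x) ((q.1.2 : ℝ) * 1) = (q.1.2 : ℝ) * 1 := by
          intro x hx
          apply min_eq_right
          rw [mul_one, hbr]
          exact mul_le_mul_of_nonneg_left (by linarith) (le_of_lt haR)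
        rw [emin (r - ε) le_rfl, emin r (by linarith), emin (r + ε) (by linarith)]
        ring
      · -- r + ε < rq : all three mins are linear a*x
        have hgt' : r + ε < rq := by
          have h' : ε < rq - r := by
            have h'' := hdist
            rw [abs_of_nonneg (by linarith : (0:ℝ) ≤ rq - r)] at h''
            exact h''
          linarith
        have emin : ∀ x : ℝ, x ≤ r + ε →
            min ((q.1.1 : ℝ) * x) ((q.1.2 : ℝ) * 1) = (q.1.1 : ℝ) * x := by
          intro x hx
          apply min_eq_left
          rw [mul_one, hbr]
          exact mul_le_mul_of_nonneg_left (by linarith) (le_of_lt haR)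
        rw [emin (r - ε) (by linarith), emin r (by linarith), emin (r + ε) le_rfl]
        ring
  rw [hsingle] at key
  have hne : (q0.1.1 : ℝ) * ε ≠ 0 := by positivity
  have : (c q0 : ℝ) = 0 := by
    by_contra hc0
    apply hne
    have := mul_eq_zero.mp key
    rcases this with h | h
    · exact absurd h hc0
    · linarith [neg_eq_zero.mp h]
  exact_mod_cast this
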